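/- For n = 5, the ratio of the two positive numbers cos(π/5)·tan(2π/5) and cos(π/5)·tan(π/5) satisfies tan(π/5)/tan(2π/5) = √5 − 2; in particular this ratio is irrational, so the two eigenvalue magnitudes cos(π/5)·tan(π/5) and cos(π/5)·tan(2π/5) are rationally independent. -/

import Mathlib

open Real

theorem stmt9 :
    Real.tan (π / 5) / Real.tan (2 * π / 5) = Real.sqrt 5 - 2 ∧
    Irrational ((Real.cos (π / 5) * Real.tan (π / 5)) /
      (Real.cos (π / 5) * Real.tan (2 * π / 5))) := by
  have hs : Real.sqrt 5 ^ 2 = 5 := Real.sq_sqrt (by norm_num)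
  have hpi := Real.pi_pos
  have ha1 : (0:ℝ) < π / 5 := by linarith
  have ha2 : π / 5 < π / 2 := by linarith
  have hb2 : 2 * π / 5 < π / 2 := by linarith
  have hsin : 0 < Real.sin (π / 5) := Real.sin_pos_of_pos_of_lt_pi ha1 (by linarith)
  have hcos : 0 < Real.cos (π / 5) := Real.cos_pos_of_mem_Ioo ⟨by linarith, ha2⟩
  have hsin2 : 0 < Real.sin (2 * π / 5) := Real.sin_pos_of_pos_of_lt_pi (by linarith) (by linarith)
  have hcos2 : 0 < Real.cos (2 * π / 5) := Real.cos_pos_of_mem_Ioo ⟨by linarith, hb2⟩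
  have hc : Real.cos (π / 5) = (1 + Real.sqrt 5) / 4 := Real.cos_pi_div_five
  have hb : (2:ℝ) * π / 5 = 2 * (π / 5) := by ring
  have hcos2' : Real.cos (2 * π / 5) = 2 * Real.cos (π / 5) ^ 2 - 1 := by
    rw [hb, Real.cos_two_mul]
  have hsin2' : Real.sin (2 * π / 5) = 2 * Real.sin (π / 5) * Real.cos (π / 5) := by
    rw [hb, Real.sin_two_mul]
  have key : Real.tan (π / 5) / Real.tan (2 * π / 5) = Real.sqrt 5 - 2 := by
    rw [Real.tan_eq_sin_div_cos, Real.tan_eq_sin_div_cos, hsin2', hcos2', hc]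
    have h4 : (0:ℝ) < 1 + Real.sqrt 5 := by positivity
    field_simp
    linear_combination (-2 * (Real.sqrt 5 - 1)) * hs
  refine ⟨key, ?_⟩
  have hrw : (Real.cos (π / 5) * Real.tan (π / 5)) /
      (Real.cos (π / 5) * Real.tan (2 * π / 5)) =
      Real.tan (π / 5) / Real.tan (2 * π / 5) := by
    rw [mul_div_mul_left _ _ hcos.ne']
  rw [hrw, key]
  have h5 : Irrational (Real.sqrt 5) := (Nat.prime_five).irrational_sqrt
  simpa using h5.sub_intCast 2
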